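/- Let Ω ⊂ ℝ^d be a bounded measurable set, let V : ℝ^d → ℝ^d be a C¹ vector field with bounded derivative, and let f : ℝ × ℝ^d → ℝ be a C¹ function with compact support. Then the function t ↦ ∫_{F_t(Ω)} f(t,x) dx, where F_t(Ω) = {x + tV(x) : x ∈ Ω}, has a one-sided (right) derivative at t = 0 equal to ∫_Ω ( D_m f(x) + div V(x) · f(0,x) ) dx, where D_m f(x) = ∂_t f(0,x) + ⟨∇_x f(0,x), V(x)⟩ and div V is the divergence of V. -/

import Mathlib

open RealInnerProductSpace MeasureTheory Matrix Polynomial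

attribute [local instance] Matrix.normedAddCommGroup Matrix.normedSpace

section aux
variable {n : ℕ}

lemma my_contDiff_det :
    ContDiff ℝ ⊤ (fun M : Matrix (Fin n) (Fin n) ℝ => M.det) := by
  simp_rw [Matrix.det_apply']
  apply ContDiff.sum
  intro σ _
  apply ContDiff.mul contDiff_const
  apply contDiff_prod
  intro i _
  exact ((Matrix.entryLinearMap ℝ ℝ (σ i) i).toContinuousLinearMap).contDiff

lemma my_hasDerivAt_det (M : Matrix (Fin n) (Fin n) ℝ) :
    HasDerivAt (fun t : ℝ => (1 + t • M).det) (Matrix.trace M) 0 := by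
  have hfun : (fun t : ℝ => (1 + t • M).det) = fun t : ℝ =>
      1 + Matrix.trace M * t + Polynomial.eval t (Polynomial.divX (Polynomial.divX
        (Matrix.det (1 + (Polynomial.X : ℝ[X]) • M.map Polynomial.C)))) * t ^ 2 :=
    funext fun t => Matrix.det_one_add_smul t M
  rw [hfun]
  have h1 : HasDerivAt (fun t : ℝ => 1 + Matrix.trace M * t) (Matrix.trace M) 0 := by
    simpa using ((hasDerivAt_id (0:ℝ)).const_mul (Matrix.trace M)).const_add 1
  have h2 : HasDerivAt (fun t : ℝ =>
      Polynomial.eval t (Polynomial.divX (Polynomial.divX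
        (Matrix.det (1 + (Polynomial.X : ℝ[X]) • M.map Polynomial.C)))) * t ^ 2) 0 0 := by
    have := ((Polynomial.hasDerivAt (Polynomial.divX (Polynomial.divX
        (Matrix.det (1 + (Polynomial.X : ℝ[X]) • M.map Polynomial.C)))) 0).mul
      (hasDerivAt_pow 2 (0:ℝ)))
    exact this.congr_deriv (by simp)
  exact (h1.add h2).congr_deriv (by simp)

noncomputable def detD : Matrix (Fin n) (Fin n) ℝ → (Matrix (Fin n) (Fin n) ℝ →L[ℝ] ℝ) :=
  fderiv ℝ (fun M : Matrix (Fin n) (Fin n) ℝ => M.det)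

lemma continuous_detD : Continuous (detD (n := n)) :=
  my_contDiff_det.continuous_fderiv (by simp)

lemma hasDerivAt_det_general (M : Matrix (Fin n) (Fin n) ℝ) (t : ℝ) :
    HasDerivAt (fun s : ℝ => (1 + s • M).det) (detD (1 + t • M) M) t := by
  have hinner : HasDerivAt (fun s : ℝ => (1 : Matrix (Fin n) (Fin n) ℝ) + s • M) M t := by
    exact (((hasDerivAt_id t).smul_const M).const_add (1 : Matrix (Fin n) (Fin n) ℝ)).congr_deriv (one_smul ℝ M)
  exact ((my_contDiff_det.differentiable (by simp)).differentiableAt.hasFDerivAt).comp_hasDerivAt t hinner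

lemma detD_one (M : Matrix (Fin n) (Fin n) ℝ) : detD 1 M = Matrix.trace M := by
  have h1 := hasDerivAt_det_general M 0
  simp only [zero_smul, add_zero] at h1
  exact h1.unique (my_hasDerivAt_det M)

end aux

set_option maxHeartbeats 1000000 in
/-- Rule for differentiating domain integrals: the function
`t ↦ ∫_{F_t(Ω)} f(t,x) dx`, with `F_t(x) = x + t V(x)`, has the one-sided
(right) derivative `∫_Ω (D_m f + div(V) f) dx` at `t = 0`. -/
theorem hasDerivWithinAt_integral_perturbed_domain
    {d : ℕ} (Ω : Set (EuclideanSpace ℝ (Fin d)))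
    (hΩb : Bornology.IsBounded Ω) (hΩm : MeasurableSet Ω)
    (V : EuclideanSpace ℝ (Fin d) → EuclideanSpace ℝ (Fin d))
    (hV : ContDiff ℝ 1 V) (hV' : ∃ C, ∀ x, ‖fderiv ℝ V x‖ ≤ C)
    (f : ℝ × EuclideanSpace ℝ (Fin d) → ℝ)
    (hf : ContDiff ℝ 1 f) (hfc : HasCompactSupport f) :
    HasDerivWithinAt
      (fun t : ℝ => ∫ x in (fun z => z + t • V z) '' Ω, f (t, x))
      (∫ x in Ω,
        (deriv (fun t : ℝ => f (t, x + t • V x)) 0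
          + (LinearMap.trace ℝ (EuclideanSpace ℝ (Fin d)))
              (fderiv ℝ V x : EuclideanSpace ℝ (Fin d) →ₗ[ℝ] EuclideanSpace ℝ (Fin d))
            * f (0, x)))
      (Set.Ici (0 : ℝ)) 0 := by
  obtain ⟨C₀, hC₀⟩ := hV'
  set C : ℝ := max C₀ 0 with hCdef
  have hC : ∀ x, ‖fderiv ℝ V x‖ ≤ C := fun x => (hC₀ x).trans (le_max_left _ _)
  have hC0 : 0 ≤ C := le_max_right _ _
  set A : (EuclideanSpace ℝ (Fin d)) → ((EuclideanSpace ℝ (Fin d)) →L[ℝ] (EuclideanSpace ℝ (Fin d))) := fun x => fderiv ℝ V x with hAdef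
  have hVd : Differentiable ℝ V := hV.differentiable one_ne_zero
  have hAc : Continuous A := hV.continuous_fderiv one_ne_zero
  set b : Module.Basis (Fin d) ℝ (EuclideanSpace ℝ (Fin d)) := (EuclideanSpace.basisFun (Fin d) ℝ).toBasis with hbdef
  set T : ((EuclideanSpace ℝ (Fin d)) →L[ℝ] (EuclideanSpace ℝ (Fin d))) →ₗ[ℝ] Matrix (Fin d) (Fin d) ℝ :=
    (LinearMap.toMatrix b b).toLinearMap ∘ₗ ContinuousLinearMap.coeLM ℝ with hTdef
  set Mat : (EuclideanSpace ℝ (Fin d)) → Matrix (Fin d) (Fin d) ℝ := fun x => T (A x) with hMatdef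
  have hMatc : Continuous Mat := T.continuous_of_finiteDimensional.comp hAc
  have hMat_eq : ∀ t : ℝ, ∀ x : (EuclideanSpace ℝ (Fin d)),
      T (ContinuousLinearMap.id ℝ (EuclideanSpace ℝ (Fin d)) + t • A x) = 1 + t • Mat x := by
    intro t x
    simp only [map_add, _root_.map_smul, hTdef, hMatdef]
    congr 1
    simp [LinearMap.toMatrix_id, ContinuousLinearMap.coeLM]
  have hdet_eq : ∀ t : ℝ, ∀ x : (EuclideanSpace ℝ (Fin d)),
      (ContinuousLinearMap.id ℝ (EuclideanSpace ℝ (Fin d)) + t • A x).det = (1 + t • Mat x).det := by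
    intro t x
    rw [← hMat_eq t x]
    simp only [ContinuousLinearMap.det, hTdef, LinearMap.coe_comp, Function.comp_apply,
      LinearEquiv.coe_coe, LinearMap.det_toMatrix]
    rfl
  have htrace : ∀ x : (EuclideanSpace ℝ (Fin d)),
      LinearMap.trace ℝ (EuclideanSpace ℝ (Fin d)) (A x : (EuclideanSpace ℝ (Fin d)) →ₗ[ℝ] (EuclideanSpace ℝ (Fin d))) = Matrix.trace (Mat x) := by
    intro x
    rw [LinearMap.trace_eq_matrix_trace ℝ b]
    rfl
  -- the parametrized integrand after change of variables
  set ψ : ℝ → (EuclideanSpace ℝ (Fin d)) → ℝ := fun t x => (fderiv ℝ f (t, x + t • V x)) (1, V x) with hψdef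
  set Fn : ℝ → (EuclideanSpace ℝ (Fin d)) → ℝ := fun t x => (1 + t • Mat x).det * f (t, x + t • V x) with hFndef
  set Fn' : ℝ → (EuclideanSpace ℝ (Fin d)) → ℝ := fun t x =>
    detD (1 + t • Mat x) (Mat x) * f (t, x + t • V x) + (1 + t • Mat x).det * ψ t x with hFn'def
  -- derivative of t ↦ f (t, x + t • V x)
  have hdf : ∀ (x : (EuclideanSpace ℝ (Fin d))) (t : ℝ),
      HasDerivAt (fun s : ℝ => f (s, x + s • V x)) (ψ t x) t := by
    intro x t
    have hc : HasDerivAt (fun s : ℝ => ((s, x + s • V x) : ℝ × (EuclideanSpace ℝ (Fin d)))) ((1 : ℝ), V x) t := by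
      refine (hasDerivAt_id t).prodMk ?_
      simpa using ((hasDerivAt_id t).smul_const (V x)).const_add x
    exact ((hf.differentiable one_ne_zero _).hasFDerivAt).comp_hasDerivAt t hc
  have hFnderiv : ∀ (x : (EuclideanSpace ℝ (Fin d))) (t : ℝ), HasDerivAt (fun s => Fn s x) (Fn' t x) t := by
    intro x t
    exact (hasDerivAt_det_general (Mat x) t).mul (hdf x t)
  -- joint continuity
  have hcurve : Continuous (fun p : ℝ × (EuclideanSpace ℝ (Fin d)) => ((p.1, p.2 + p.1 • V p.2) : ℝ × (EuclideanSpace ℝ (Fin d)))) := by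
    fun_prop
  have hφc : Continuous (fun p : ℝ × (EuclideanSpace ℝ (Fin d)) => (1 + p.1 • Mat p.2).det) := by
    have : Continuous (fun p : ℝ × (EuclideanSpace ℝ (Fin d)) => (1 : Matrix (Fin d) (Fin d) ℝ) + p.1 • Mat p.2) := by
      fun_prop
    exact my_contDiff_det.continuous.comp this
  have hψc : Continuous (fun p : ℝ × (EuclideanSpace ℝ (Fin d)) => ψ p.1 p.2) := by
    apply Continuous.clm_apply
    · exact (hf.continuous_fderiv one_ne_zero).comp hcurve
    · fun_prop
  have hFn'c : Continuous (fun p : ℝ × (EuclideanSpace ℝ (Fin d)) => Fn' p.1 p.2) := by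
    apply Continuous.add
    · apply Continuous.mul
      · apply Continuous.clm_apply
        · exact continuous_detD.comp (by fun_prop :
            Continuous (fun p : ℝ × (EuclideanSpace ℝ (Fin d)) => (1 : Matrix (Fin d) (Fin d) ℝ) + p.1 • Mat p.2))
        · exact hMatc.comp continuous_snd
      · exact hf.continuous.comp hcurve
    · exact hφc.mul hψc
  have hFnc : Continuous (fun p : ℝ × (EuclideanSpace ℝ (Fin d)) => Fn p.1 p.2) := hφc.mul (hf.continuous.comp hcurve)
  -- smallness setup
  set ε : ℝ := 1 / (C + 1) with hεdef
  have hε : 0 < ε := by positivity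
  have htC : ∀ t : ℝ, |t| < ε → |t| * C < 1 := by
    intro t ht
    rw [hεdef, lt_div_iff₀ (by positivity : (0:ℝ) < C + 1)] at ht
    nlinarith [abs_nonneg t]
  have hsmall : ∀ t : ℝ, |t| < ε → ∀ s : ℝ, |s| ≤ |t| → ∀ x : (EuclideanSpace ℝ (Fin d)), ‖s • A x‖ < 1 := by
    intro t ht s hs x
    have h1 : ‖s • A x‖ ≤ |s| * C := by
      refine (norm_smul_le s (A x)).trans ?_
      rw [Real.norm_eq_abs]
      exact mul_le_mul_of_nonneg_left (hC x) (abs_nonneg s)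
    have h2 : |s| * C ≤ |t| * C := mul_le_mul_of_nonneg_right hs hC0
    exact lt_of_le_of_lt (h1.trans h2) (htC t ht)
  -- positivity of the determinant
  have hdetpos : ∀ t : ℝ, |t| < ε → ∀ x : (EuclideanSpace ℝ (Fin d)), 0 < (1 + t • Mat x).det := by
    intro t ht x
    have hne : ∀ s : ℝ, |s| ≤ |t| → (1 + s • Mat x).det ≠ 0 := by
      intro s hs h0
      rw [← hdet_eq s x] at h0
      have hker := LinearMap.bot_lt_ker_of_det_eq_zero
        (f := ((ContinuousLinearMap.id ℝ (EuclideanSpace ℝ (Fin d)) + s • A x :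
          (EuclideanSpace ℝ (Fin d)) →L[ℝ] (EuclideanSpace ℝ (Fin d))) :
          (EuclideanSpace ℝ (Fin d)) →ₗ[ℝ] (EuclideanSpace ℝ (Fin d)))) h0
      obtain ⟨u, humem, hune⟩ := SetLike.exists_of_lt hker
      have hu0 : u ≠ 0 := by simpa using hune
      have happ : u + s • (A x) u = 0 := by
        have := (LinearMap.mem_ker).1 humem
        simpa [ContinuousLinearMap.add_apply] using this
      have hnorm : ‖u‖ ≤ ‖s • A x‖ * ‖u‖ := by
        have : u = -((s • A x) u) := by
          rw [eq_neg_iff_add_eq_zero]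
          simpa using happ
        calc ‖u‖ = ‖-((s • A x) u)‖ := congrArg norm this
        _ = ‖(s • A x) u‖ := norm_neg _
        _ ≤ ‖s • A x‖ * ‖u‖ := (s • A x).le_opNorm u
      have hlt : ‖s • A x‖ * ‖u‖ < 1 * ‖u‖ :=
        mul_lt_mul_of_pos_right (hsmall t ht s hs x) (norm_pos_iff.2 hu0)
      rw [one_mul] at hlt
      exact absurd (lt_of_le_of_lt hnorm hlt) (lt_irrefl _)
    by_contra h
    push_neg at h
    have hlt : (1 + t • Mat x).det < 0 := lt_of_le_of_ne h (hne t le_rfl)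
    have hcont : ContinuousOn (fun s : ℝ => (1 + s • Mat x).det) (Set.uIcc t 0) := by
      apply Continuous.continuousOn
      exact my_contDiff_det.continuous.comp (by fun_prop)
    have h0mem : (0 : ℝ) ∈ Set.uIcc ((1 + t • Mat x).det) ((1 + (0:ℝ) • Mat x).det) := by
      rw [Set.mem_uIcc]
      left
      refine ⟨le_of_lt hlt, ?_⟩
      simp
    obtain ⟨s, hsmem, hs0⟩ := intermediate_value_uIcc hcont h0mem
    have habs : |s| ≤ |t| := by
      rcases Set.mem_uIcc.1 hsmem with ⟨h1, h2⟩ | ⟨h1, h2⟩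
      · rw [abs_of_nonpos h2, abs_of_nonpos (le_trans h1 h2)]; linarith
      · rw [abs_of_nonneg h1, abs_of_nonneg (le_trans h1 h2)]; exact h2
    exact hne s habs hs0
  -- injectivity of the perturbed identity
  have hinj : ∀ t : ℝ, |t| < ε →
      Function.Injective (fun z : (EuclideanSpace ℝ (Fin d)) => z + t • V z) := by
    intro t ht x y hxy
    simp only at hxy
    by_contra hne
    have hlip : ‖V y - V x‖ ≤ C * ‖y - x‖ :=
      Convex.norm_image_sub_le_of_norm_fderiv_le (fun z _ => hVd z) (fun z _ => hC z)
        convex_univ (Set.mem_univ x) (Set.mem_univ y)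
    have h1 : x - y = t • (V y - V x) := by
      rw [smul_sub]
      rw [sub_eq_sub_iff_add_eq_add]
      rw [hxy]
      abel
    have h2 : ‖x - y‖ ≤ |t| * (C * ‖y - x‖) := by
      calc ‖x - y‖ = ‖t • (V y - V x)‖ := by rw [h1]
      _ ≤ ‖t‖ * ‖V y - V x‖ := norm_smul_le _ _
      _ ≤ |t| * (C * ‖y - x‖) := by
          rw [Real.norm_eq_abs]
          exact mul_le_mul_of_nonneg_left hlip (abs_nonneg t)
    rw [norm_sub_rev y x] at h2
    have hpos : 0 < ‖x - y‖ := by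
      rw [norm_pos_iff]
      exact sub_ne_zero_of_ne hne
    have h3 : |t| * (C * ‖x - y‖) = (|t| * C) * ‖x - y‖ := by ring
    rw [h3] at h2
    have h4 : (|t| * C) * ‖x - y‖ < 1 * ‖x - y‖ :=
      mul_lt_mul_of_pos_right (htC t ht) hpos
    rw [one_mul] at h4
    exact absurd (lt_of_le_of_lt h2 h4) (lt_irrefl _)
  -- change of variables
  have hkey : ∀ t : ℝ, |t| < ε →
      (∫ x in (fun z => z + t • V z) '' Ω, f (t, x)) = ∫ x in Ω, Fn t x := by
    intro t ht
    have hfd : ∀ x ∈ Ω, HasFDerivWithinAt (fun z : (EuclideanSpace ℝ (Fin d)) => z + t • V z)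
        (ContinuousLinearMap.id ℝ (EuclideanSpace ℝ (Fin d)) + t • A x) Ω x := by
      intro x _
      exact ((hasFDerivAt_id x).add (((hVd x).hasFDerivAt).const_smul t)).hasFDerivWithinAt
    rw [MeasureTheory.integral_image_eq_integral_abs_det_fderiv_smul volume hΩm hfd
      ((hinj t ht).injOn) (fun y => f (t, y))]
    apply MeasureTheory.setIntegral_congr_fun hΩm
    intro x _
    dsimp only
    rw [hdet_eq t x, abs_of_pos (hdetpos t ht x)]
    simp only [hFndef, smul_eq_mul]
  -- uniform bound on the derivative over a compact set
  have hKc : IsCompact (closure Ω) := hΩb.isCompact_closure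
  have hSc : IsCompact ((Set.Icc (-ε) ε) ×ˢ closure Ω) := isCompact_Icc.prod hKc
  obtain ⟨B, hB⟩ := hSc.exists_bound_of_continuousOn hFn'c.continuousOn
  have hμ : volume Ω < ⊤ := hΩb.measure_lt_top
  have hfin : IsFiniteMeasure (volume.restrict Ω) :=
    ⟨by rwa [Measure.restrict_apply_univ]⟩
  have main := hasDerivAt_integral_of_dominated_loc_of_deriv_le (F := Fn) (F' := Fn')
    (x₀ := (0:ℝ)) (s := Metric.ball (0:ℝ) ε) (μ := volume.restrict Ω) (bound := fun _ => B) (Metric.ball_mem_nhds (0:ℝ) hε)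
    (Filter.Eventually.of_forall fun t =>
      (hFnc.comp (Continuous.prodMk_right t)).aestronglyMeasurable)
    (((hFnc.comp (Continuous.prodMk_right (0:ℝ))).continuousOn.integrableOn_compact
      hKc).mono_set subset_closure)
    ((hFn'c.comp (Continuous.prodMk_right (0:ℝ))).aestronglyMeasurable)
    (by
      filter_upwards [MeasureTheory.ae_restrict_mem hΩm] with x hx
      intro t htb
      refine hB (t, x) ⟨?_, subset_closure hx⟩
      have : |t| < ε := by simpa [Real.dist_eq] using Metric.mem_ball.1 htb
      exact ⟨by linarith [abs_le.1 (le_of_lt this) |>.1, (abs_le.1 (le_of_lt this)).1],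
        (abs_le.1 (le_of_lt this)).2⟩)
    (MeasureTheory.integrable_const B)
    (Filter.Eventually.of_forall fun x t _ => hFnderiv x t)
  -- identify the value of the derivative
  have hval : (∫ x in Ω, Fn' 0 x) = ∫ x in Ω,
      (deriv (fun t : ℝ => f (t, x + t • V x)) 0
        + (LinearMap.trace ℝ (EuclideanSpace ℝ (Fin d)))
            (fderiv ℝ V x : EuclideanSpace ℝ (Fin d) →ₗ[ℝ] EuclideanSpace ℝ (Fin d))
          * f (0, x)) := by
    apply MeasureTheory.integral_congr_ae
    apply Filter.Eventually.of_forall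
    intro x
    have h1 : deriv (fun t : ℝ => f (t, x + t • V x)) 0 = ψ 0 x := (hdf x 0).deriv
    have h2 : (LinearMap.trace ℝ (EuclideanSpace ℝ (Fin d)))
        (fderiv ℝ V x : EuclideanSpace ℝ (Fin d) →ₗ[ℝ] EuclideanSpace ℝ (Fin d))
        = Matrix.trace (Mat x) := htrace x
    dsimp only
    rw [h1, h2]
    simp only [hFn'def, zero_smul, add_zero, detD_one, Matrix.det_one, one_mul]
    ring
  -- conclude
  have heq : (fun t : ℝ => ∫ x in (fun z => z + t • V z) '' Ω, f (t, x))
      =ᶠ[nhds (0:ℝ)] (fun t => ∫ x in Ω, Fn t x) := by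
    have hball : ∀ᶠ t : ℝ in nhds 0, |t| < ε := by
      filter_upwards [Metric.ball_mem_nhds (0:ℝ) hε] with t ht
      simpa [Real.dist_eq] using ht
    filter_upwards [hball] with t ht
    exact hkey t ht
  rw [← hval]
  exact ((Filter.EventuallyEq.hasDerivAt_iff heq).2 main.2).hasDerivWithinAt
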